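/- arXiv:2310.06314 — 2 statements merged into one kernel-verified Lean document; each statement's English description precedes it below -/
import Mathlib

section
/- Let ℓ = 2k+1, s ∈ ℕ, ε ∈ {−1,1}, z an indeterminate, and η = (1 − ε(1+2z))/2. Then 2k(k+1)·[ (k+2)(2k+3)^s − ε(2k+1)^{s+1}(1+2z) + (k−1)(2k−1)^s ] = η·ℓ^{s+3} + Σ_{j=1}^{⌊(s+3)/2⌋} e_j·ℓ^{s+3−2j} for some coefficients e_j (polynomials in z with integer coefficients); in particular, this expression, viewed as a polynomial in ℓ = 2k+1, involves only powers ℓ^t with t ≡ s+3 (mod 2). -/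
open Finset

private lemma core_pair (s : ℕ) :
    (∃ c : ℕ → ℤ, ∀ k : ℚ,
      k * (k + 1) * ((2*k+4) * (2*k+3)^s + (2*k-2) * (2*k-1)^s - 2 * (2*k+1)^(s+1))
        = ∑ j ∈ Icc 1 ((s+3)/2), (c j : ℚ) * (2*k+1)^(s+3-2*j)) ∧
    (∃ c : ℕ → ℤ, ∀ k : ℚ,
      k * (k + 1) * ((2*k+4) * (2*k+3)^(s+1) + (2*k-2) * (2*k-1)^(s+1) - 2 * (2*k+1)^(s+2))
        = ∑ j ∈ Icc 1 ((s+4)/2), (c j : ℚ) * (2*k+1)^(s+4-2*j)) := by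
  induction s with
  | zero =>
    constructor
    · refine ⟨fun _ => 0, fun k => ?_⟩
      simp only [Int.cast_zero, zero_mul, Finset.sum_const_zero, pow_zero]
      ring
    · refine ⟨fun j => if j = 1 then 3 else -3, fun k => ?_⟩
      have h2 : Icc 1 ((0+4)/2) = ({1, 2} : Finset ℕ) := by decide
      rw [h2, Finset.sum_insert (by decide), Finset.sum_singleton]
      norm_num
      ring
  | succ n ih =>
    obtain ⟨⟨c, hc⟩, ⟨d, hd⟩⟩ := ih
    refine ⟨⟨d, hd⟩, ?_⟩
    set M : ℕ := (n+3)/2 with hM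
    set M₁ : ℕ := (n+4)/2 with hM₁
    have hMM : (n+1+4)/2 = M + 1 := by omega
    have hM₁le : M₁ ≤ M + 1 := by omega
    refine ⟨fun j =>
      (if j ∈ Icc 1 M₁ then 2 * d j else 0)
      + (if j ∈ Icc 1 M then -(c j) else 0)
      + (if j ∈ Icc 2 (M+1) then 4 * c (j-1) else 0)
      + (if j = 1 then 2 else 0)
      + (if j = 2 then -2 else 0), fun k => ?_⟩
    have key : ∑ j ∈ Icc 1 ((n+1+4)/2),
        (((if j ∈ Icc 1 M₁ then 2 * d j else 0)
        + (if j ∈ Icc 1 M then -(c j) else 0)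
        + (if j ∈ Icc 2 (M+1) then 4 * c (j-1) else 0)
        + (if j = 1 then 2 else 0)
        + (if j = 2 then -2 else 0) : ℤ) : ℚ) * (2*k+1)^(n+1+4-2*j)
        = 2*(2*k+1) * (∑ j ∈ Icc 1 M₁, (d j : ℚ) * (2*k+1)^(n+4-2*j))
          - ((2*k+1)^2 - 4) * (∑ j ∈ Icc 1 M, (c j : ℚ) * (2*k+1)^(n+3-2*j))
          + 2*(2*k+1)^(n+3) - 2*(2*k+1)^(n+1) := by
      rw [hMM]
      have hexp : ∀ j : ℕ, n+1+4-2*j = n+5-2*j := fun j => by omega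
      simp only [hexp]
      push_cast
      simp only [add_mul, Finset.sum_add_distrib, ite_mul, zero_mul]
      rw [Finset.sum_ite_mem, Finset.sum_ite_mem, Finset.sum_ite_mem,
        Finset.sum_ite_eq', Finset.sum_ite_eq']
      have i1 : Icc 1 (M+1) ∩ Icc 1 M₁ = Icc 1 M₁ := by
        rw [Finset.inter_eq_right]; exact Finset.Icc_subset_Icc_right hM₁le
      have i2 : Icc 1 (M+1) ∩ Icc 1 M = Icc 1 M := by
        rw [Finset.inter_eq_right]; exact Finset.Icc_subset_Icc_right (by omega)
      have i3 : Icc 1 (M+1) ∩ Icc 2 (M+1) = Icc 2 (M+1) := by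
        rw [Finset.inter_eq_right]; exact Finset.Icc_subset_Icc_left (by omega)
      rw [i1, i2, i3]
      have m1 : (1 : ℕ) ∈ Icc 1 (M+1) := by
        rw [Finset.mem_Icc]; omega
      have m2 : (2 : ℕ) ∈ Icc 1 (M+1) := by
        rw [Finset.mem_Icc]; omega
      rw [if_pos m1, if_pos m2]
      have e1 : ∑ j ∈ Icc 1 M₁, (2 * (d j : ℚ)) * (2*k+1)^(n+5-2*j)
          = 2*(2*k+1) * (∑ j ∈ Icc 1 M₁, (d j : ℚ) * (2*k+1)^(n+4-2*j)) := by
        rw [Finset.mul_sum]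
        refine Finset.sum_congr rfl (fun j hj => ?_)
        rw [Finset.mem_Icc] at hj
        rw [show n+5-2*j = (n+4-2*j)+1 by omega]
        ring
      have e2 : ∑ j ∈ Icc 1 M, (-(c j : ℚ)) * (2*k+1)^(n+5-2*j)
          = -((2*k+1)^2 * (∑ j ∈ Icc 1 M, (c j : ℚ) * (2*k+1)^(n+3-2*j))) := by
        rw [Finset.mul_sum, ← Finset.sum_neg_distrib]
        refine Finset.sum_congr rfl (fun j hj => ?_)
        rw [Finset.mem_Icc] at hj
        rw [show n+5-2*j = (n+3-2*j)+2 by omega]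
        ring
      have e3 : ∑ j ∈ Icc 2 (M+1), (4 * (c (j-1) : ℚ)) * (2*k+1)^(n+5-2*j)
          = 4 * (∑ j ∈ Icc 1 M, (c j : ℚ) * (2*k+1)^(n+3-2*j)) := by
        rw [Finset.mul_sum]
        refine Finset.sum_nbij' (fun j => j - 1) (fun j => j + 1) ?_ ?_ ?_ ?_ ?_
        · intro a ha; simp only [Finset.mem_Icc] at *; omega
        · intro a ha; simp only [Finset.mem_Icc] at *; omega
        · intro a ha; simp only [Finset.mem_Icc] at ha; omega
        · intro a ha; simp only [Finset.mem_Icc] at ha; omega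
        · intro a ha
          rw [Finset.mem_Icc] at ha
          rw [show n+5-2*a = n+3-2*(a-1) by omega]
          ring
      rw [e1, e2, e3]
      rw [show n+5-2*1 = n+3 by omega, show n+5-2*2 = n+1 by omega]
      ring
    rw [key, ← hc k, ← hd k]
    ring

theorem adjoint_parity_expansion (s : ℕ) (ε : ℚ) (hε : ε = 1 ∨ ε = -1) :
    ∃ e : ℕ → Polynomial ℤ, ∀ z k : ℚ,
      2 * k * (k + 1) *
          ((k + 2) * (2 * k + 3) ^ s - ε * (2 * k + 1) ^ (s + 1) * (1 + 2 * z)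
            + (k - 1) * (2 * k - 1) ^ s)
        = (1 - ε * (1 + 2 * z)) / 2 * (2 * k + 1) ^ (s + 3)
          + ∑ j ∈ Finset.Icc 1 ((s + 3) / 2),
              (Polynomial.aeval z (e j)) * (2 * k + 1) ^ (s + 3 - 2 * j) := by
  obtain ⟨c, hc⟩ := (core_pair s).1
  have m1 : (1:ℕ) ∈ Icc 1 ((s+3)/2) := by rw [Finset.mem_Icc]; omega
  rcases hε with h | h <;> subst h
  · refine ⟨fun j => Polynomial.C (c j) + (if j = 1 then Polynomial.X else 0),
      fun z k => ?_⟩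
    have hsum : ∑ j ∈ Finset.Icc 1 ((s+3)/2),
        (Polynomial.aeval z (Polynomial.C (c j) + (if j = 1 then Polynomial.X else 0)))
          * (2*k+1)^(s+3-2*j)
        = (∑ j ∈ Icc 1 ((s+3)/2), (c j : ℚ) * (2*k+1)^(s+3-2*j))
          + z * (2*k+1)^(s+1) := by
      simp only [map_add, Polynomial.aeval_C, apply_ite (Polynomial.aeval z),
        Polynomial.aeval_X, map_zero, algebraMap_int_eq, eq_intCast, map_intCast,
        add_mul, Finset.sum_add_distrib, ite_mul, zero_mul, Finset.sum_ite_eq']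
      rw [if_pos m1, show s+3-2*1 = s+1 by omega]
    rw [hsum, ← hc k]
    ring
  · refine ⟨fun j => Polynomial.C (c j) + (if j = 1 then -(1 + Polynomial.X) else 0),
      fun z k => ?_⟩
    have hsum : ∑ j ∈ Finset.Icc 1 ((s+3)/2),
        (Polynomial.aeval z (Polynomial.C (c j) + (if j = 1 then -(1 + Polynomial.X) else 0)))
          * (2*k+1)^(s+3-2*j)
        = (∑ j ∈ Icc 1 ((s+3)/2), (c j : ℚ) * (2*k+1)^(s+3-2*j))
          + (-(1+z)) * (2*k+1)^(s+1) := by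
      simp only [map_add, Polynomial.aeval_C, apply_ite (Polynomial.aeval z),
        Polynomial.aeval_X, map_zero, map_neg, map_one, algebraMap_int_eq, eq_intCast, map_intCast,
        add_mul, Finset.sum_add_distrib, ite_mul, zero_mul, Finset.sum_ite_eq']
      rw [if_pos m1, show s+3-2*1 = s+1 by omega]
    rw [hsum, ← hc k]
    ring
end

section
/- For any odd prime p and any integer z, 2z·Σ_{k=0}^{p-1}(2k+1)·ε^k·S_k(z) ≡ 2z (mod p) for each ε ∈ {−1,1}. -/
open Finset

/-- Large Schröder polynomial `S_n(z)`. -/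
noncomputable def schroederS (n : ℕ) (z : ℚ) : ℚ :=
  ∑ k ∈ Finset.range (n + 1),
    (n.choose k : ℚ) * ((n + k).choose k : ℚ) * z ^ k / (k + 1)

/-- Little Schröder polynomial `s_n(z)`. -/
noncomputable def schroederLittle (n : ℕ) (z : ℚ) : ℚ :=
  ∑ k ∈ Finset.Icc 1 n,
    (1 / (n : ℚ)) * (n.choose k : ℚ) * (n.choose (k - 1) : ℚ) * z ^ (k - 1) * (z + 1) ^ (n - k)

/-- Central Delannoy polynomial `D_n(z)`. -/
noncomputable def delannoy (n : ℕ) (z : ℚ) : ℚ :=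
  ∑ k ∈ Finset.range (n + 1), (n.choose k : ℚ) * ((n + k).choose k : ℚ) * z ^ k

lemma auxN1 (m j : ℕ) :
    ((j : ℚ) + 1) ^ 2 * ((m + 2).choose (j + 1) : ℚ) * ((m + j + 3).choose (j + 1) : ℚ)
      = ((m : ℚ) + j + 3) * ((m : ℚ) + j + 2)
          * ((m + 1).choose j : ℚ) * ((m + j + 1).choose j : ℚ) := by
  have h1 : ((m : ℚ) + 2) * ((m + 1).choose j : ℚ)
      = ((m + 2).choose (j + 1) : ℚ) * ((j : ℚ) + 1) := by
    exact_mod_cast congrArg (Nat.cast (R := ℚ)) (Nat.add_one_mul_choose_eq (m + 1) j)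
  have h2 : ((m : ℚ) + j + 3) * ((m + j + 2).choose j : ℚ)
      = ((m + j + 3).choose (j + 1) : ℚ) * ((j : ℚ) + 1) := by
    exact_mod_cast congrArg (Nat.cast (R := ℚ)) (Nat.add_one_mul_choose_eq (m + j + 2) j)
  have h3 : ((m + j + 1).choose j : ℚ) * ((m : ℚ) + j + 2)
      = ((m + j + 2).choose j : ℚ) * ((m : ℚ) + 2) := by
    have := congrArg (Nat.cast (R := ℚ)) (Nat.choose_mul_succ_eq (m + j + 1) j)
    push_cast at this
    rw [show m + j + 1 + 1 - j = m + 2 by omega] at this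
    push_cast at this
    linarith [this]
  linear_combination (-(((j:ℚ)+1) * ((m + j + 3).choose (j + 1) : ℚ))) * h1
    - (((m:ℚ)+2) * ((m + 1).choose j : ℚ)) * h2
    - (((m:ℚ)+j+3) * ((m + 1).choose j : ℚ)) * h3

lemma auxN2 (m j : ℕ) :
    ((j : ℚ) + 1) ^ 2 * (m.choose (j + 1) : ℚ) * ((m + j + 1).choose (j + 1) : ℚ)
      = ((m + 1 - j : ℕ) : ℚ) * ((m - j : ℕ) : ℚ)
          * ((m + 1).choose j : ℚ) * ((m + j + 1).choose j : ℚ) := by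
  have f1 : (m.choose j : ℚ) * ((m : ℚ) + 1)
      = ((m + 1).choose j : ℚ) * ((m + 1 - j : ℕ) : ℚ) := by
    exact_mod_cast congrArg (Nat.cast (R := ℚ)) (Nat.choose_mul_succ_eq m j)
  have f2 : (m.choose (j + 1) : ℚ) * ((j : ℚ) + 1)
      = (m.choose j : ℚ) * ((m - j : ℕ) : ℚ) := by
    exact_mod_cast congrArg (Nat.cast (R := ℚ)) (Nat.choose_succ_right_eq m j)
  have f3 : ((m + j + 1).choose (j + 1) : ℚ) * ((j : ℚ) + 1)
      = ((m + j + 1).choose j : ℚ) * ((m : ℚ) + 1) := by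
    have := congrArg (Nat.cast (R := ℚ)) (Nat.choose_succ_right_eq (m + j + 1) j)
    rw [show m + j + 1 - j = m + 1 by omega] at this
    push_cast at this
    linarith [this]
  linear_combination (((j:ℚ)+1) * ((m + j + 1).choose (j + 1) : ℚ)) * f2
    + (((m - j : ℕ) : ℚ) * (m.choose j : ℚ)) * f3
    + (((m - j : ℕ) : ℚ) * ((m + j + 1).choose j : ℚ)) * f1

lemma coeffQ (m j : ℕ) :
    (4 * (m : ℚ) + 6) * ((m + 1).choose j : ℚ) * ((m + j + 1).choose j : ℚ) / ((j : ℚ) + 1)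
      = ((m + 2).choose (j + 1) : ℚ) * ((m + j + 3).choose (j + 1) : ℚ)
        - (m.choose (j + 1) : ℚ) * ((m + j + 1).choose (j + 1) : ℚ) := by
  have hj : ((j : ℚ) + 1) ≠ 0 := by positivity
  rw [div_eq_iff hj]
  refine mul_left_cancel₀ hj ?_
  have n1 := auxN1 m j
  have n2 := auxN2 m j
  have key : ((j : ℚ) + 1) * ((4 * (m : ℚ) + 6)
        * ((m + 1).choose j : ℚ) * ((m + j + 1).choose j : ℚ))
      = (((m : ℚ) + j + 3) * ((m : ℚ) + j + 2)
          - ((m + 1 - j : ℕ) : ℚ) * ((m - j : ℕ) : ℚ))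
        * (((m + 1).choose j : ℚ) * ((m + j + 1).choose j : ℚ)) := by
    rcases le_or_gt j m with hjm | hjm
    · rw [Nat.cast_sub (by omega), Nat.cast_sub (by omega)]
      push_cast
      ring
    · rcases le_or_gt j (m + 1) with hjm1 | hjm1
      · have : j = m + 1 := by omega
        subst this
        rw [show m + 1 - (m + 1) = 0 by omega, show m - (m + 1) = 0 by omega]
        push_cast
        ring
      · have : (m + 1).choose j = 0 := Nat.choose_eq_zero_of_lt hjm1
        rw [this]
        push_cast
        ring
  linear_combination key - n1 + n2

lemma step (m : ℕ) (z : ℚ) :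
    2 * z * (2 * ((m : ℚ) + 1) + 1) * schroederS (m + 1) z
      = delannoy (m + 2) z - delannoy m z := by
  unfold schroederS delannoy
  have hext : ∑ k ∈ Finset.range (m + 1), (m.choose k : ℚ) * ((m + k).choose k : ℚ) * z ^ k
      = ∑ k ∈ Finset.range (m + 3), (m.choose k : ℚ) * ((m + k).choose k : ℚ) * z ^ k := by
    apply Finset.sum_subset
    · intro x hx
      simp only [Finset.mem_range] at hx ⊢
      omega
    · intro x _ hnx
      simp only [Finset.mem_range] at hnx
      have : m < x := by omega
      simp [Nat.choose_eq_zero_of_lt this]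
  rw [hext, ← Finset.sum_sub_distrib, Finset.mul_sum,
    Finset.sum_range_succ' (fun k => ((m + 2).choose k : ℚ) * ((m + 2 + k).choose k : ℚ) * z ^ k
      - (m.choose k : ℚ) * ((m + k).choose k : ℚ) * z ^ k) (m + 2)]
  have h0 : ((m + 2).choose 0 : ℚ) * ((m + 2 + 0).choose 0 : ℚ) * z ^ 0
      - (m.choose 0 : ℚ) * ((m + 0).choose 0 : ℚ) * z ^ 0 = 0 := by simp
  rw [h0, add_zero]
  apply Finset.sum_congr rfl
  intro j hj
  rw [show m + 1 + j = m + j + 1 by omega, show m + 2 + (j + 1) = m + j + 3 by omega,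
    show m + (j + 1) = m + j + 1 by omega]
  have hc := coeffQ m j
  linear_combination z ^ (j + 1) * hc

lemma telescope (ε z : ℚ) (hε2 : ε ^ 2 = 1) (q : ℕ) :
    ∑ i ∈ Finset.range q,
        2 * z * ((2 * ((i : ℚ) + 1) + 1) * ε ^ (i + 1) * schroederS (i + 1) z)
      = (ε ^ (q + 2) * delannoy (q + 1) z + ε ^ (q + 1) * delannoy q z)
        - (ε ^ 2 * delannoy 1 z + ε ^ 1 * delannoy 0 z) := by
  have h := Finset.sum_range_sub
    (fun i => ε ^ (i + 2) * delannoy (i + 1) z + ε ^ (i + 1) * delannoy i z) q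
  rw [← h]
  apply Finset.sum_congr rfl
  intro i _
  simp only [show i + 1 + 2 = i + 3 from rfl, show i + 1 + 1 = i + 2 from rfl]
  have hp3 : ε ^ (i + 3) = ε ^ (i + 1) := by
    calc ε ^ (i + 3) = ε ^ (i + 1) * ε ^ 2 := by ring
    _ = ε ^ (i + 1) := by rw [hε2, mul_one]
  have hs := step i z
  linear_combination ε ^ (i + 1) * hs - delannoy (i + 2) z * hp3

theorem two_z_sum_congr (p : ℕ) (hp : p.Prime) (hodd : Odd p)
    (ε : ℚ) (hε : ε = 1 ∨ ε = -1) (z : ℤ) :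
    ∃ m : ℤ,
      2 * (z : ℚ) * (∑ k ∈ Finset.range p, (2 * (k : ℚ) + 1) * ε ^ k * schroederS k (z : ℚ))
        - 2 * (z : ℚ) = (p : ℚ) * m := by
  obtain ⟨q, rfl⟩ : ∃ q, p = q + 1 := ⟨p - 1, (Nat.succ_pred_eq_of_pos hp.pos).symm⟩
  haveI : Fact (q + 1).Prime := ⟨hp⟩
  have hqeven : Even q := by
    rcases hodd with ⟨t, ht⟩
    exact ⟨t, by omega⟩
  have hε2 : ε ^ 2 = 1 := by rcases hε with rfl | rfl <;> norm_num
  have he1 : ε ^ (q + 2) = 1 := by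
    rcases hε with rfl | rfl
    · simp
    · exact Even.neg_one_pow (by exact Even.add hqeven (by norm_num))
  have he2 : ε ^ (q + 1) = ε := by
    rcases hε with rfl | rfl
    · simp
    · rw [Odd.neg_one_pow (Even.add_one hqeven)]
  have hS0 : schroederS 0 (z : ℚ) = 1 := by simp [schroederS]
  have hD0 : delannoy 0 (z : ℚ) = 1 := by simp [delannoy]
  have hD1 : delannoy 1 (z : ℚ) = 1 + 2 * (z : ℚ) := by
    norm_num [delannoy, Finset.sum_range_succ]
  -- telescoped identity
  have key : 2 * (z : ℚ)
        * (∑ k ∈ Finset.range (q + 1), (2 * (k : ℚ) + 1) * ε ^ k * schroederS k (z : ℚ))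
      = delannoy (q + 1) (z : ℚ) + ε * delannoy q (z : ℚ) - 1 - ε := by
    rw [Finset.mul_sum, Finset.sum_range_succ']
    push_cast
    rw [telescope ε (z : ℚ) hε2 q, he1, he2, hD0, hD1, hS0, hε2]
    ring
  -- integer Delannoy values
  have hAq : delannoy (q + 1) (z : ℚ)
      = ((∑ k ∈ Finset.range (q + 2),
          ((q + 1).choose k : ℤ) * ((q + 1 + k).choose k : ℤ) * z ^ k : ℤ) : ℚ) := by
    unfold delannoy
    push_cast
    rfl
  have hBq : delannoy q (z : ℚ)
      = ((∑ k ∈ Finset.range (q + 1),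
          (q.choose k : ℤ) * ((q + k).choose k : ℤ) * z ^ k : ℤ) : ℚ) := by
    unfold delannoy
    push_cast
    rfl
  set A : ℤ := ∑ k ∈ Finset.range (q + 2),
      ((q + 1).choose k : ℤ) * ((q + 1 + k).choose k : ℤ) * z ^ k with hA
  set B : ℤ := ∑ k ∈ Finset.range (q + 1),
      (q.choose k : ℤ) * ((q + k).choose k : ℤ) * z ^ k with hB
  -- divisibility for A
  have hAdvd : ∃ a : ℤ, A - 1 - 2 * z = (q + 1) * a := by
    have hzero : ((A - 1 - 2 * z : ℤ) : ZMod (q + 1)) = 0 := by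
      push_cast [hA]
      rw [Finset.sum_range_succ]
      rw [Finset.sum_range_succ' (fun k => (((q + 1).choose k : ℕ) : ZMod (q + 1))
        * (((q + 1 + k).choose k : ℕ) : ZMod (q + 1)) * (z : ZMod (q + 1)) ^ k) q]
      have hmid : ∑ i ∈ Finset.range q, (((q + 1).choose (i + 1) : ℕ) : ZMod (q + 1))
          * (((q + 1 + (i + 1)).choose (i + 1) : ℕ) : ZMod (q + 1))
          * (z : ZMod (q + 1)) ^ (i + 1) = 0 := by
        apply Finset.sum_eq_zero
        intro i hi
        have : (((q + 1).choose (i + 1) : ℕ) : ZMod (q + 1)) = 0 := by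
          rw [ZMod.natCast_eq_zero_iff]
          exact hp.dvd_choose_self (by omega) (by simp at hi; omega)
        rw [this, zero_mul, zero_mul]
      rw [hmid]
      have htop : (((q + 1 + (q + 1)).choose (q + 1) : ℕ) : ZMod (q + 1)) = 2 := by
        have hmod : (q + 1 + (q + 1)).choose (q + 1) ≡ 2 [MOD (q + 1)] := by
          have := Choose.choose_modEq_choose_mod_mul_choose_div_nat
            (p := q + 1) (n := q + 1 + (q + 1)) (k := q + 1)
          rw [show q + 1 + (q + 1) = 2 * (q + 1) by ring] at this ⊢
          simpa [Nat.mul_mod_left, Nat.mod_self, Nat.mul_div_cancel_left _ (by omega : 0 < q + 1),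
            Nat.mul_div_cancel _ (by omega : 0 < q + 1), Nat.div_self (by omega : 0 < q + 1)]
            using this
        have := (ZMod.natCast_eq_natCast_iff _ _ _).mpr hmod
        simpa using this
      rw [htop]
      have hfermat : (z : ZMod (q + 1)) ^ (q + 1) = (z : ZMod (q + 1)) := ZMod.pow_card _
      rw [hfermat]
      push_cast [Nat.choose_self, Nat.choose_zero_right]
      ring
    obtain ⟨a, ha⟩ := (ZMod.intCast_zmod_eq_zero_iff_dvd _ _).mp hzero
    exact ⟨a, by exact_mod_cast ha⟩
  -- divisibility for B
  have hBdvd : ∃ b : ℤ, B - 1 = (q + 1) * b := by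
    have hzero : ((B - 1 : ℤ) : ZMod (q + 1)) = 0 := by
      push_cast [hB]
      rw [Finset.sum_range_succ' (fun k => ((q.choose k : ℕ) : ZMod (q + 1))
        * (((q + k).choose k : ℕ) : ZMod (q + 1)) * (z : ZMod (q + 1)) ^ k) q]
      have hmid : ∑ i ∈ Finset.range q, ((q.choose (i + 1) : ℕ) : ZMod (q + 1))
          * (((q + (i + 1)).choose (i + 1) : ℕ) : ZMod (q + 1))
          * (z : ZMod (q + 1)) ^ (i + 1) = 0 := by
        apply Finset.sum_eq_zero
        intro i hi
        have : (((q + (i + 1)).choose (i + 1) : ℕ) : ZMod (q + 1)) = 0 := by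
          rw [ZMod.natCast_eq_zero_iff]
          refine hp.dvd_choose (by simp at hi; omega) (by omega) (by omega)
        rw [this, mul_zero, zero_mul]
      rw [hmid]
      simp
    obtain ⟨b, hb⟩ := (ZMod.intCast_zmod_eq_zero_iff_dvd _ _).mp hzero
    exact ⟨b, by exact_mod_cast hb⟩
  obtain ⟨a, ha⟩ := hAdvd
  obtain ⟨b, hb⟩ := hBdvd
  have ha' : (A : ℚ) - 1 - 2 * (z : ℚ) = ((q : ℚ) + 1) * (a : ℚ) := by exact_mod_cast ha
  have hb' : (B : ℚ) - 1 = ((q : ℚ) + 1) * (b : ℚ) := by exact_mod_cast hb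
  rcases hε with rfl | rfl
  · refine ⟨a + b, ?_⟩
    rw [key, hAq, hBq]
    push_cast
    linarith [ha', hb']
  · refine ⟨a - b, ?_⟩
    rw [key, hAq, hBq]
    push_cast
    linarith [ha', hb']
end
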